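/- For every integer m ≥ 2 and every 1 ≤ i ≤ m−1, the Boros-Moll coefficients satisfy i · d_i(m)² > (i+1) · d_{i+1}(m) · d_{i-1}(m); equivalently, the sequence {i! · d_i(m)} is log-concave. -/

import Mathlib

noncomputable def d (m i : ℕ) : ℚ :=
  (2:ℚ)^(-(2*(m:ℤ))) * ∑ k ∈ Finset.Icc i m,
    (2:ℚ)^k * (Nat.choose (2*m-2*k) (m-k)) * (Nat.choose (m+k) k) * (Nat.choose k i)

noncomputable def Tq (m i k : ℕ) : ℚ :=
  (2:ℚ)^k * (Nat.choose (2*m-2*k) (m-k)) * (Nat.choose (m+k) k) * (Nat.choose k i)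

noncomputable def Hq (m j k : ℕ) : ℚ :=
  8 * k * (2:ℚ)^k * (Nat.choose (2*(m-k)+1) (m-k)) * (Nat.choose (m+k) k) * (Nat.choose k (j+1))

lemma d_eq (m i : ℕ) : d m i = (2:ℚ)^(-(2*(m:ℤ))) * ∑ k ∈ Finset.range (m+1), Tq m i k := by
  unfold d Tq
  congr 1
  apply Finset.sum_subset
  · intro k hk
    simp only [Finset.mem_Icc] at hk
    simp [Finset.mem_range]; omega
  · intro k hk hk2
    simp only [Finset.mem_range] at hk
    simp only [Finset.mem_Icc, not_and, not_le] at hk2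
    have : k < i := by omega
    simp [Nat.choose_eq_zero_of_lt this]

lemma Tq_nonneg (m i k : ℕ) : 0 ≤ Tq m i k := by
  unfold Tq; positivity

lemma d_nonneg (m i : ℕ) : 0 ≤ d m i := by
  unfold d
  apply mul_nonneg (by positivity)
  exact Finset.sum_nonneg fun k _ => by positivity

lemma d_pos (m i : ℕ) (h : i ≤ m) : 0 < d m i := by
  unfold d
  apply mul_pos (by positivity)
  apply Finset.sum_pos
  · intro k hk
    simp only [Finset.mem_Icc] at hk
    have h1 : 0 < Nat.choose (2*m-2*k) (m-k) := Nat.choose_pos (by omega)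
    have h2 : 0 < Nat.choose (m+k) k := Nat.choose_pos (by omega)
    have h3 : 0 < Nat.choose k i := Nat.choose_pos hk.1
    positivity
  · exact ⟨i, by simp [Finset.mem_Icc, h]⟩

lemma d_zero (m i : ℕ) (h : m < i) : d m i = 0 := by
  unfold d
  rw [Finset.Icc_eq_empty (by omega), Finset.sum_empty, mul_zero]

lemma halg (K N J a b c d4 p q r u v w t : ℚ)
    (hb : b = 2*a) (hd : d4 = 2*c) (hc : c*(N+2) = b*(2*N+3))
    (hq : q*(K+N+2) = p*(2*K+N+2)) (hr : r*(K+1) = p*(2*K+N+2))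
    (hv : v*(J+1) = u*(K-J)) (hw : w = u+v)
    (hK : 0 ≤ K) (hN : 0 ≤ N) (hJ : 0 ≤ J) :
    2*(K+N+2) * (t*d4*q*v) + 8*(K+1)*(2*t)*(a*r*w)
    = 8*(K+N+J+2)*(t*b*p*u) + 4*(4*K+4*N+2*J+9)*(t*b*p*v) + 8*K*(t*c*p*v) := by
  subst hb hd hw
  have h1 : q = p*(2*K+N+2)/(K+N+2) := by rw [eq_div_iff (by positivity)]; linarith
  have h2 : r = p*(2*K+N+2)/(K+1) := by rw [eq_div_iff (by positivity)]; linarith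
  have h3 : c = 2*a*(2*N+3)/(N+2) := by rw [eq_div_iff (by positivity)]; linarith
  have h4 : v = u*(K-J)/(J+1) := by rw [eq_div_iff (by positivity)]; linarith
  subst h1 h2 h4
  rw [h3]
  field_simp
  ring

lemma key (m j k : ℕ) (hk : k + 1 ≤ m) :
    2*((m:ℚ)+1) * Tq (m+1) (j+1) k + Hq m j (k+1)
    = 8*((m:ℚ)+(j:ℚ)+1) * Tq m j k + 4*(4*(m:ℚ)+2*(j:ℚ)+5) * Tq m (j+1) k + Hq m j k := by
  obtain ⟨n, rfl⟩ : ∃ n, m = k + n + 1 := ⟨m - k - 1, by omega⟩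
  unfold Tq Hq
  simp only [show 2*(k+n+1+1)-2*k = 2*n+4 by omega, show (k+n+1+1)-k = n+2 by omega,
    show 2*(k+n+1)-2*k = 2*n+2 by omega, show (k+n+1)-k = n+1 by omega,
    show (k+n+1)-(k+1) = n by omega, show 2*(n+1)+1 = 2*n+3 by omega,
    show k+n+1+1+k = 2*k+n+2 by omega, show k+n+1+k = 2*k+n+1 by omega,
    show k+n+1+(k+1) = 2*k+n+2 by omega]
  rcases le_or_gt j k with hj | hj
  · have hb : ((2*n+2).choose (n+1) : ℚ) = 2 * ((2*n+1).choose n) := by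
      have h := Nat.choose_succ_succ (2*n+1) n
      simp only [Nat.succ_eq_add_one] at h
      have hs := Nat.choose_symm_half n
      rw [show 2*n+1+1 = 2*n+2 by omega] at h
      rw [h, hs]; push_cast; ring
    have hd : ((2*n+4).choose (n+2) : ℚ) = 2 * ((2*n+3).choose (n+1)) := by
      have h := Nat.choose_succ_succ (2*n+3) (n+1)
      simp only [Nat.succ_eq_add_one] at h
      have hs := Nat.choose_symm_half (n+1)
      rw [show 2*n+3+1 = 2*n+4 by omega, show n+1+1 = n+2 by omega] at h
      rw [show 2*(n+1)+1 = 2*n+3 by omega, show n+1+1 = n+2 by omega] at hs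
      rw [h, hs]; push_cast; ring
    have hc : ((2*n+3).choose (n+1) : ℚ) * ((n:ℚ)+2) = ((2*n+2).choose (n+1)) * (2*(n:ℚ)+3) := by
      have h1 : (2*n+3) * ((2*n+2).choose n) = ((2*n+3).choose (n+1)) * (n+1) := by
        have := Nat.add_one_mul_choose_eq (2*n+2) n
        simpa [Nat.succ_eq_add_one, show 2*n+2+1 = 2*n+3 by omega] using this
      have h2 : ((2*n+2).choose (n+1)) * (n+1) = ((2*n+2).choose n) * (n+2) := by
        have := Nat.choose_succ_right_eq (2*n+2) n
        simpa [show 2*n+2-n = n+2 by omega] using this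
      have h1q : ((2*n+3) : ℚ) * ((2*n+2).choose n) = ((2*n+3).choose (n+1)) * ((n:ℚ)+1) := by
        exact_mod_cast h1
      have h2q : (((2*n+2).choose (n+1) : ℚ)) * ((n:ℚ)+1) = ((2*n+2).choose n) * ((n:ℚ)+2) := by
        exact_mod_cast h2
      have hne : ((n:ℚ)+1) ≠ 0 := by positivity
      apply mul_left_cancel₀ hne
      nlinarith [h1q, h2q]
    have hq : (((2*k+n+2).choose k : ℚ)) * ((k:ℚ)+(n:ℚ)+2) = ((2*k+n+1).choose k) * (2*(k:ℚ)+(n:ℚ)+2) := by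
      have h1 := Nat.add_one_mul_choose_eq (2*k+n+1) (k+n+1)
      have e1 : (2*k+n+1).choose (k+n+1) = (2*k+n+1).choose k := by
        rw [← Nat.choose_symm (show k ≤ 2*k+n+1 by omega), show 2*k+n+1-k = k+n+1 by omega]
      have e2 : (2*k+n+1+1).choose (k+n+1+1) = (2*k+n+2).choose k := by
        rw [show 2*k+n+1+1 = 2*k+n+2 by omega, show k+n+1+1 = k+n+2 by omega,
          ← Nat.choose_symm (show k ≤ 2*k+n+2 by omega), show 2*k+n+2-k = k+n+2 by omega]
      rw [e1, e2] at h1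
      have h1q : ((2*k+n+1+1 : ℕ) : ℚ) * ((2*k+n+1).choose k) = ((2*k+n+2).choose k) * ((k+n+1+1 : ℕ) : ℚ) := by
        exact_mod_cast h1
      push_cast at h1q; linarith
    have hr : (((2*k+n+2).choose (k+1) : ℚ)) * ((k:ℚ)+1) = ((2*k+n+1).choose k) * (2*(k:ℚ)+(n:ℚ)+2) := by
      have h1 := Nat.add_one_mul_choose_eq (2*k+n+1) k
      rw [show 2*k+n+1+1 = 2*k+n+2 by omega] at h1
      have h1q : ((2*k+n+2 : ℕ) : ℚ) * ((2*k+n+1).choose k) = ((2*k+n+2).choose (k+1)) * ((k+1 : ℕ) : ℚ) := by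
        exact_mod_cast h1
      push_cast at h1q; linarith
    have hv : ((k.choose (j+1)) : ℚ) * ((j:ℚ)+1) = (k.choose j) * ((k:ℚ)-(j:ℚ)) := by
      have h0 := Nat.choose_succ_right_eq k j
      have h1 : ((k.choose (j+1) * (j+1) : ℕ) : ℚ) = ((k.choose j * (k - j) : ℕ) : ℚ) := by
        exact_mod_cast h0
      push_cast [Nat.cast_sub hj] at h1
      linarith
    have hw : (((k+1).choose (j+1)) : ℚ) = (k.choose j) + (k.choose (j+1)) := by
      rw [Nat.choose_succ_succ]; push_cast; ring
    have H := halg (k:ℚ) (n:ℚ) (j:ℚ)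
      ((2*n+1).choose n) ((2*n+2).choose (n+1)) ((2*n+3).choose (n+1)) ((2*n+4).choose (n+2))
      ((2*k+n+1).choose k) ((2*k+n+2).choose k) ((2*k+n+2).choose (k+1))
      (k.choose j) (k.choose (j+1)) ((k+1).choose (j+1)) ((2:ℚ)^k)
      hb hd hc hq hr hv hw (by positivity) (by positivity) (by positivity)
    push_cast
    push_cast at H
    linear_combination H
  · simp [Nat.choose_eq_zero_of_lt (show k < j+1 by omega),
      Nat.choose_eq_zero_of_lt (show k < j by omega),
      Nat.choose_eq_zero_of_lt (show k+1 < j+1 by omega)]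

noncomputable def Hq0 (m k : ℕ) : ℚ :=
  8 * k * (2:ℚ)^k * (Nat.choose (2*(m-k)+1) (m-k)) * (Nat.choose (m+k) k)

-- central binomial relation: (m+1) * C(2m+1,m) = (2m+1) * C(2m,m)
lemma central (m : ℕ) : (((2*m+1).choose m : ℚ)) * ((m:ℚ)+1) = ((2*m).choose m) * (2*(m:ℚ)+1) := by
  have h1 := Nat.add_one_mul_choose_eq (2*m) m
  rw [show 2*m+1 = 2*m+1 from rfl] at h1
  have hs := Nat.choose_symm_half m
  rw [hs] at h1
  have h1q : ((2*m+1 : ℕ) : ℚ) * ((2*m).choose m) = ((2*m+1).choose m) * ((m+1 : ℕ) : ℚ) := by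
    exact_mod_cast h1
  push_cast at h1q; linarith

lemma doubling (m : ℕ) : (((2*m+2).choose (m+1)) : ℚ) = 2 * ((2*m+1).choose m) := by
  have h := Nat.choose_succ_succ (2*m+1) m
  simp only [Nat.succ_eq_add_one] at h
  have hs := Nat.choose_symm_half m
  rw [show 2*m+1+1 = 2*m+2 by omega] at h
  rw [h, hs]; push_cast; ring

lemma bdry (m j : ℕ) :
    2*((m:ℚ)+1) * (Tq (m+1) (j+1) m + Tq (m+1) (j+1) (m+1))
    = 8*((m:ℚ)+(j:ℚ)+1) * Tq m j m + 4*(4*(m:ℚ)+2*(j:ℚ)+5) * Tq m (j+1) m + Hq m j m := by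
  unfold Tq Hq
  simp only [show 2*(m+1)-2*m = 2 by omega, show (m+1)-m = 1 by omega,
    show 2*(m+1)-2*(m+1) = 0 by omega, show (m+1)-(m+1) = 0 by omega,
    show 2*m-2*m = 0 by omega, show m-m = 0 by omega,
    show m+1+m = 2*m+1 by omega, show m+1+(m+1) = 2*m+2 by omega, show m+m = 2*m by omega,
    show 2*0+1 = 1 by omega, Nat.choose_zero_right, Nat.choose_one_right]
  rcases le_or_gt j m with hj | hj
  · have hv : ((m.choose (j+1)) : ℚ) * ((j:ℚ)+1) = (m.choose j) * ((m:ℚ)-(j:ℚ)) := by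
      have h0 := Nat.choose_succ_right_eq m j
      have h1 : ((m.choose (j+1) * (j+1) : ℕ) : ℚ) = ((m.choose j * (m - j) : ℕ) : ℚ) := by
        exact_mod_cast h0
      push_cast [Nat.cast_sub hj] at h1
      linarith
    have hw : (((m+1).choose (j+1)) : ℚ) = (m.choose j) + (m.choose (j+1)) := by
      rw [Nat.choose_succ_succ]; push_cast; ring
    have hg := central m
    have hs := doubling m
    rw [hw, hs]
    have hv' : (m.choose (j+1) : ℚ) = (m.choose j) * ((m:ℚ)-(j:ℚ)) / ((j:ℚ)+1) := by
      rw [eq_div_iff (by positivity)]; linarith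
    have hg' : ((2*m+1).choose m : ℚ) = ((2*m).choose m) * (2*(m:ℚ)+1) / ((m:ℚ)+1) := by
      rw [eq_div_iff (by positivity)]; linarith
    rw [hv', hg']
    push_cast
    field_simp
    ring
  · simp [Nat.choose_eq_zero_of_lt (show m < j+1 by omega),
      Nat.choose_eq_zero_of_lt (show m < j by omega),
      Nat.choose_eq_zero_of_lt (show m+1 < j+1 by omega)]

lemma key0 (m k : ℕ) (hk : k + 1 ≤ m) :
    2*((m:ℚ)+1) * Tq (m+1) 0 k + Hq0 m (k+1)
    = 4*(4*(m:ℚ)+3) * Tq m 0 k + Hq0 m k := by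
  obtain ⟨n, rfl⟩ : ∃ n, m = k + n + 1 := ⟨m - k - 1, by omega⟩
  unfold Tq Hq0
  simp only [show 2*(k+n+1+1)-2*k = 2*n+4 by omega, show (k+n+1+1)-k = n+2 by omega,
    show 2*(k+n+1)-2*k = 2*n+2 by omega, show (k+n+1)-k = n+1 by omega,
    show (k+n+1)-(k+1) = n by omega, show 2*(n+1)+1 = 2*n+3 by omega,
    show k+n+1+1+k = 2*k+n+2 by omega, show k+n+1+k = 2*k+n+1 by omega,
    show k+n+1+(k+1) = 2*k+n+2 by omega, Nat.choose_zero_right]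
  have hb : ((2*n+2).choose (n+1) : ℚ) = 2 * ((2*n+1).choose n) := by
    have h := Nat.choose_succ_succ (2*n+1) n
    simp only [Nat.succ_eq_add_one] at h
    have hs := Nat.choose_symm_half n
    rw [show 2*n+1+1 = 2*n+2 by omega] at h
    rw [h, hs]; push_cast; ring
  have hd : ((2*n+4).choose (n+2) : ℚ) = 2 * ((2*n+3).choose (n+1)) := by
    have h := Nat.choose_succ_succ (2*n+3) (n+1)
    simp only [Nat.succ_eq_add_one] at h
    have hs := Nat.choose_symm_half (n+1)
    rw [show 2*n+3+1 = 2*n+4 by omega, show n+1+1 = n+2 by omega] at h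
    rw [show 2*(n+1)+1 = 2*n+3 by omega, show n+1+1 = n+2 by omega] at hs
    rw [h, hs]; push_cast; ring
  have hc : ((2*n+3).choose (n+1) : ℚ) * ((n:ℚ)+2) = ((2*n+2).choose (n+1)) * (2*(n:ℚ)+3) := by
    have h1 : (2*n+3) * ((2*n+2).choose n) = ((2*n+3).choose (n+1)) * (n+1) := by
      have := Nat.add_one_mul_choose_eq (2*n+2) n
      simpa [Nat.succ_eq_add_one, show 2*n+2+1 = 2*n+3 by omega] using this
    have h2 : ((2*n+2).choose (n+1)) * (n+1) = ((2*n+2).choose n) * (n+2) := by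
      have := Nat.choose_succ_right_eq (2*n+2) n
      simpa [show 2*n+2-n = n+2 by omega] using this
    have h1q : ((2*n+3) : ℚ) * ((2*n+2).choose n) = ((2*n+3).choose (n+1)) * ((n:ℚ)+1) := by
      exact_mod_cast h1
    have h2q : (((2*n+2).choose (n+1) : ℚ)) * ((n:ℚ)+1) = ((2*n+2).choose n) * ((n:ℚ)+2) := by
      exact_mod_cast h2
    have hne : ((n:ℚ)+1) ≠ 0 := by positivity
    apply mul_left_cancel₀ hne
    nlinarith [h1q, h2q]
  have hq : (((2*k+n+2).choose k : ℚ)) * ((k:ℚ)+(n:ℚ)+2) = ((2*k+n+1).choose k) * (2*(k:ℚ)+(n:ℚ)+2) := by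
    have h1 := Nat.add_one_mul_choose_eq (2*k+n+1) (k+n+1)
    have e1 : (2*k+n+1).choose (k+n+1) = (2*k+n+1).choose k := by
      rw [← Nat.choose_symm (show k ≤ 2*k+n+1 by omega), show 2*k+n+1-k = k+n+1 by omega]
    have e2 : (2*k+n+1+1).choose (k+n+1+1) = (2*k+n+2).choose k := by
      rw [show 2*k+n+1+1 = 2*k+n+2 by omega, show k+n+1+1 = k+n+2 by omega,
        ← Nat.choose_symm (show k ≤ 2*k+n+2 by omega), show 2*k+n+2-k = k+n+2 by omega]
    rw [e1, e2] at h1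
    have h1q : ((2*k+n+1+1 : ℕ) : ℚ) * ((2*k+n+1).choose k) = ((2*k+n+2).choose k) * ((k+n+1+1 : ℕ) : ℚ) := by
      exact_mod_cast h1
    push_cast at h1q; linarith
  have hr : (((2*k+n+2).choose (k+1) : ℚ)) * ((k:ℚ)+1) = ((2*k+n+1).choose k) * (2*(k:ℚ)+(n:ℚ)+2) := by
    have h1 := Nat.add_one_mul_choose_eq (2*k+n+1) k
    rw [show 2*k+n+1+1 = 2*k+n+2 by omega] at h1
    have h1q : ((2*k+n+2 : ℕ) : ℚ) * ((2*k+n+1).choose k) = ((2*k+n+2).choose (k+1)) * ((k+1 : ℕ) : ℚ) := by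
      exact_mod_cast h1
    push_cast at h1q; linarith
  have hq' : ((2*k+n+2).choose k : ℚ) = ((2*k+n+1).choose k) * (2*(k:ℚ)+(n:ℚ)+2) / ((k:ℚ)+(n:ℚ)+2) := by
    rw [eq_div_iff (by positivity)]; linarith
  have hr' : ((2*k+n+2).choose (k+1) : ℚ) = ((2*k+n+1).choose k) * (2*(k:ℚ)+(n:ℚ)+2) / ((k:ℚ)+1) := by
    rw [eq_div_iff (by positivity)]; linarith
  have hc' : ((2*n+3).choose (n+1) : ℚ) = ((2*n+2).choose (n+1)) * (2*(n:ℚ)+3) / ((n:ℚ)+2) := by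
    rw [eq_div_iff (by positivity)]; linarith
  rw [hd, hc', hb, hq', hr']
  push_cast
  field_simp
  ring

lemma bdry0 (m : ℕ) :
    2*((m:ℚ)+1) * (Tq (m+1) 0 m + Tq (m+1) 0 (m+1))
    = 4*(4*(m:ℚ)+3) * Tq m 0 m + Hq0 m m := by
  unfold Tq Hq0
  simp only [show 2*(m+1)-2*m = 2 by omega, show (m+1)-m = 1 by omega,
    show 2*(m+1)-2*(m+1) = 0 by omega, show (m+1)-(m+1) = 0 by omega,
    show 2*m-2*m = 0 by omega, show m-m = 0 by omega,
    show m+1+m = 2*m+1 by omega, show m+1+(m+1) = 2*m+2 by omega, show m+m = 2*m by omega,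
    show 2*0+1 = 1 by omega, Nat.choose_zero_right, Nat.choose_one_right]
  have hg := central m
  have hs := doubling m
  rw [hs]
  have hg' : ((2*m+1).choose m : ℚ) = ((2*m).choose m) * (2*(m:ℚ)+1) / ((m:ℚ)+1) := by
    rw [eq_div_iff (by positivity)]; linarith
  rw [hg']
  push_cast
  field_simp
  ring

lemma sum_rec (m j : ℕ) :
    ∑ k ∈ Finset.range (m+2), 2*((m:ℚ)+1) * Tq (m+1) (j+1) k
    = ∑ k ∈ Finset.range (m+1),
        (8*((m:ℚ)+(j:ℚ)+1) * Tq m j k + 4*(4*(m:ℚ)+2*(j:ℚ)+5) * Tq m (j+1) k) := by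
  rw [Finset.sum_range_succ, Finset.sum_range_succ, Finset.sum_range_succ]
  have h1 : ∑ k ∈ Finset.range m, 2*((m:ℚ)+1) * Tq (m+1) (j+1) k
      = ∑ k ∈ Finset.range m,
        ((8*((m:ℚ)+(j:ℚ)+1) * Tq m j k + 4*(4*(m:ℚ)+2*(j:ℚ)+5) * Tq m (j+1) k)
          + (Hq m j k - Hq m j (k+1))) := by
    apply Finset.sum_congr rfl
    intro k hk
    have hk' : k + 1 ≤ m := Finset.mem_range.mp hk
    have := key m j k hk'
    linarith
  have h2 : ∑ k ∈ Finset.range m, (Hq m j k - Hq m j (k+1)) = Hq m j 0 - Hq m j m :=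
    Finset.sum_range_sub' (fun k => Hq m j k) m
  have h0 : Hq m j 0 = 0 := by unfold Hq; push_cast; ring
  rw [h1, Finset.sum_add_distrib, h2, h0]
  have hb := bdry m j
  linarith

lemma rec1 (m j : ℕ) :
    2*((m:ℚ)+1) * d (m+1) (j+1)
    = 2*((m:ℚ)+(j:ℚ)+1) * d m j + (4*(m:ℚ)+2*(j:ℚ)+5) * d m (j+1) := by
  rw [d_eq, d_eq, d_eq]
  have hz : (2:ℚ)^(-(2*((m+1:ℕ):ℤ))) = (2:ℚ)^(-(2*(m:ℤ))) / 4 := by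
    push_cast
    rw [show -(2*((m:ℤ)+1)) = -(2*(m:ℤ)) + (-2) by ring, zpow_add₀ (by norm_num : (2:ℚ) ≠ 0)]
    have h2 : (2:ℚ)^(-2:ℤ) = 1/4 := by norm_num
    rw [h2]; ring
  rw [hz]
  have hs := sum_rec m j
  rw [Finset.sum_add_distrib, ← Finset.mul_sum, ← Finset.mul_sum, ← Finset.mul_sum] at hs
  linear_combination ((2:ℚ)^(-(2*(m:ℤ)))/4) * hs

lemma sum_rec0 (m : ℕ) :
    ∑ k ∈ Finset.range (m+2), 2*((m:ℚ)+1) * Tq (m+1) 0 k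
    = ∑ k ∈ Finset.range (m+1), 4*(4*(m:ℚ)+3) * Tq m 0 k := by
  rw [Finset.sum_range_succ, Finset.sum_range_succ, Finset.sum_range_succ]
  have h1 : ∑ k ∈ Finset.range m, 2*((m:ℚ)+1) * Tq (m+1) 0 k
      = ∑ k ∈ Finset.range m, (4*(4*(m:ℚ)+3) * Tq m 0 k + (Hq0 m k - Hq0 m (k+1))) := by
    apply Finset.sum_congr rfl
    intro k hk
    have := key0 m k (Finset.mem_range.mp hk)
    linarith
  have h2 : ∑ k ∈ Finset.range m, (Hq0 m k - Hq0 m (k+1)) = Hq0 m 0 - Hq0 m m :=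
    Finset.sum_range_sub' (fun k => Hq0 m k) m
  have h0 : Hq0 m 0 = 0 := by unfold Hq0; push_cast; ring
  rw [h1, Finset.sum_add_distrib, h2, h0]
  have hb := bdry0 m
  linarith

lemma rec0 (m : ℕ) :
    2*((m:ℚ)+1) * d (m+1) 0 = (4*(m:ℚ)+3) * d m 0 := by
  rw [d_eq, d_eq]
  have hz : (2:ℚ)^(-(2*((m+1:ℕ):ℤ))) = (2:ℚ)^(-(2*(m:ℤ))) / 4 := by
    push_cast
    rw [show -(2*((m:ℤ)+1)) = -(2*(m:ℤ)) + (-2) by ring, zpow_add₀ (by norm_num : (2:ℚ) ≠ 0)]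
    have h2 : (2:ℚ)^(-2:ℤ) = 1/4 := by norm_num
    rw [h2]; ring
  rw [hz]
  have hs := sum_rec0 m
  rw [← Finset.mul_sum, ← Finset.mul_sum] at hs
  linear_combination ((2:ℚ)^(-(2*(m:ℤ)))/4) * hs

noncomputable def E (m i : ℕ) : ℚ := (Nat.factorial i : ℚ) * d m i

lemma E_nonneg (m i : ℕ) : 0 ≤ E m i := by
  unfold E; exact mul_nonneg (by positivity) (d_nonneg m i)

lemma E_pos (m i : ℕ) (h : i ≤ m) : 0 < E m i := by
  unfold E; exact mul_pos (by positivity) (d_pos m i h)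

lemma E_zero (m i : ℕ) (h : m < i) : E m i = 0 := by
  unfold E; rw [d_zero m i h, mul_zero]

lemma Erec1 (m j : ℕ) :
    2*((m:ℚ)+1) * E (m+1) (j+1)
    = (4*(m:ℚ)+2*(j:ℚ)+5) * E m (j+1) + 2*((j:ℚ)+1)*((m:ℚ)+(j:ℚ)+1) * E m j := by
  unfold E
  rw [Nat.factorial_succ]
  push_cast
  linear_combination (((j:ℚ)+1) * (Nat.factorial j : ℚ)) * rec1 m j

lemma Erec0 (m : ℕ) :
    2*((m:ℚ)+1) * E (m+1) 0 = (4*(m:ℚ)+3) * E m 0 := by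
  unfold E
  simp only [Nat.factorial_zero, Nat.cast_one, one_mul]
  linear_combination rec0 m

lemma quad (M I x y z w : ℚ) (hM : 0 ≤ M) (hI : 1 ≤ I) (hy : 0 < y) (hx : 0 ≤ x)
    (hz : 0 ≤ z) (hw : 0 ≤ w)
    (h1 : z*y ≤ x^2) (h2 : x*w ≤ y^2) (h3 : z*w ≤ x*y) :
    ((4*M+2*I+5)*z + 2*(I+1)*(M+I+1)*x) * ((4*M+2*I+1)*y + 2*(I-1)*(M+I-1)*w)
    < ((4*M+2*I+3)*x + 2*I*(M+I)*y)^2 := by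
  have c1 : (0:ℚ) ≤ ((4*M+2*I+5)*(4*M+2*I+1)) * (x^2 - z*y) :=
    mul_nonneg (by nlinarith) (by linarith)
  have hB : (0:ℚ) ≤ 2*(I-1)*(M+I-1) :=
    mul_nonneg (by linarith) (by linarith)
  have c2 : (0:ℚ) ≤ ((4*M+2*I+5)*(2*(I-1)*(M+I-1))) * (x*y - z*w) :=
    mul_nonneg (mul_nonneg (by linarith) hB) (by linarith)
  have c3 : (0:ℚ) ≤ ((2*(I+1)*(M+I+1))*(2*(I-1)*(M+I-1))) * (y^2 - x*w) :=
    mul_nonneg (mul_nonneg (by nlinarith) hB) (by linarith)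
  have c4 : (0:ℚ) ≤ (2*x - (2*M-2*I+3)*y)^2 := sq_nonneg _
  have c5 : (0:ℚ) ≤ 4*((I-1)*y)^2 := by positivity
  have c6 : (0:ℚ) ≤ 16*(M*(I-1))*y^2 :=
    mul_nonneg (by nlinarith) (sq_nonneg y)
  have c7 : (0:ℚ) ≤ 4*M*y^2 := by positivity
  have c8 : (0:ℚ) ≤ 20*(I-1)*y^2 := mul_nonneg (by nlinarith) (sq_nonneg y)
  have c9 : (0:ℚ) < 3*y^2 := by positivity
  linarith [c1, c2, c3, c4, c5, c6, c7, c8, c9]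

lemma main : ∀ m j : ℕ, j + 1 ≤ m → E m (j+2) * E m j < E m (j+1)^2 := by
  intro m
  induction m with
  | zero => intro j h; omega
  | succ m ih =>
    intro j hj
    have hM : (0:ℚ) ≤ (m:ℚ) := by positivity
    have ha2 : (0:ℚ) < (2*((m:ℚ)+1))^2 := by positivity
    rcases Nat.eq_zero_or_eq_succ_pred j with hj0 | hjs
    · -- j = 0
      subst hj0
      have hy : 0 < E m 0 := E_pos m 0 (by omega)
      have hx : 0 ≤ E m 1 := E_nonneg m 1
      have hz : 0 ≤ E m 2 := E_nonneg m 2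
      have h1 : E m 2 * E m 0 ≤ (E m 1)^2 := by
        rcases le_or_gt 1 m with h | h
        · have := ih 0 h; nlinarith [this]
        · have hx0 : E m 1 = 0 := E_zero m 1 (by omega)
          have hz0 : E m 2 = 0 := E_zero m 2 (by omega)
          rw [hx0, hz0]; nlinarith
      have h2 : E m 1 * (0:ℚ) ≤ (E m 0)^2 := by nlinarith
      have h3 : E m 2 * (0:ℚ) ≤ E m 1 * E m 0 := by nlinarith
      have hq := quad (m:ℚ) 1 (E m 1) (E m 0) (E m 2) 0 hM le_rfl hy hx hz le_rfl h1 h2 h3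
      have r1 : 2*((m:ℚ)+1) * E (m+1) 1 = (4*(m:ℚ)+2*1+3)*(E m 1) + 2*1*((m:ℚ)+1)*(E m 0) := by
        have h := Erec1 m 0; push_cast at h ⊢; linear_combination h
      have r2 : 2*((m:ℚ)+1) * E (m+1) 2 = (4*(m:ℚ)+2*1+5)*(E m 2) + 2*(1+1)*((m:ℚ)+1+1)*(E m 1) := by
        have h := Erec1 m 1; push_cast at h ⊢; linear_combination h
      have r0 : 2*((m:ℚ)+1) * E (m+1) 0 = (4*(m:ℚ)+2*1+1)*(E m 0) + 2*(1-1)*((m:ℚ)+1-1)*(0:ℚ) := by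
        have h := Erec0 m; push_cast at h ⊢; linear_combination h
      have hE : (2*((m:ℚ)+1) * E (m+1) 2) * (2*((m:ℚ)+1) * E (m+1) 0)
          < (2*((m:ℚ)+1) * E (m+1) 1)^2 := by
        rw [r1, r2, r0]; exact hq
      nlinarith [hE, ha2]
    · -- j = j'+1
      obtain ⟨j', rfl⟩ : ∃ j', j = j'+1 := ⟨j.pred, hjs⟩
      have hy : 0 < E m (j'+1) := E_pos m (j'+1) (by omega)
      have hx : 0 ≤ E m (j'+2) := E_nonneg m (j'+2)
      have hz : 0 ≤ E m (j'+3) := E_nonneg m (j'+3)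
      have hw : 0 ≤ E m j' := E_nonneg m j'
      have h2 : E m (j'+2) * E m j' ≤ (E m (j'+1))^2 := by
        have := ih j' (by omega); nlinarith [this]
      have h1 : E m (j'+3) * E m (j'+1) ≤ (E m (j'+2))^2 := by
        rcases le_or_gt (j'+2) m with h | h
        · have := ih (j'+1) h; nlinarith [this]
        · have hx0 : E m (j'+2) = 0 := E_zero m (j'+2) (by omega)
          have hz0 : E m (j'+3) = 0 := E_zero m (j'+3) (by omega)
          rw [hx0, hz0]; nlinarith
      have h3 : E m (j'+3) * E m j' ≤ E m (j'+2) * E m (j'+1) := by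
        rcases le_or_gt (j'+2) m with h | h
        · have hxp : 0 < E m (j'+2) := E_pos m (j'+2) h
          have hxy : 0 < E m (j'+2) * E m (j'+1) := mul_pos hxp hy
          have hmul : (E m (j'+3) * E m (j'+1)) * (E m (j'+2) * E m j') ≤ (E m (j'+2))^2*(E m (j'+1))^2 :=
            mul_le_mul h1 h2 (mul_nonneg hx hw) (sq_nonneg _)
          have h5 : (E m (j'+3) * E m j') * (E m (j'+2) * E m (j'+1))
              ≤ (E m (j'+2) * E m (j'+1)) * (E m (j'+2) * E m (j'+1)) := by linarith [hmul]
          exact le_of_mul_le_mul_right h5 hxy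
        · have hz0 : E m (j'+3) = 0 := E_zero m (j'+3) (by omega)
          rw [hz0]; nlinarith [mul_nonneg hx (le_of_lt hy)]
      have hI : (1:ℚ) ≤ (j':ℚ)+2 := by
        have : (0:ℚ) ≤ (j':ℚ) := by positivity
        linarith
      have hq := quad (m:ℚ) ((j':ℚ)+2) (E m (j'+2)) (E m (j'+1)) (E m (j'+3)) (E m j')
        hM hI hy hx hz hw h1 h2 h3
      have r1 : 2*((m:ℚ)+1) * E (m+1) (j'+2)
          = (4*(m:ℚ)+2*((j':ℚ)+2)+3)*(E m (j'+2)) + 2*((j':ℚ)+2)*((m:ℚ)+((j':ℚ)+2))*(E m (j'+1)) := by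
        have h := Erec1 m (j'+1); push_cast at h ⊢; linear_combination h
      have r2 : 2*((m:ℚ)+1) * E (m+1) (j'+3)
          = (4*(m:ℚ)+2*((j':ℚ)+2)+5)*(E m (j'+3)) + 2*(((j':ℚ)+2)+1)*((m:ℚ)+((j':ℚ)+2)+1)*(E m (j'+2)) := by
        have h := Erec1 m (j'+2); push_cast at h ⊢; linear_combination h
      have r0 : 2*((m:ℚ)+1) * E (m+1) (j'+1)
          = (4*(m:ℚ)+2*((j':ℚ)+2)+1)*(E m (j'+1)) + 2*(((j':ℚ)+2)-1)*((m:ℚ)+((j':ℚ)+2)-1)*(E m j') := by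
        have h := Erec1 m j'; push_cast at h ⊢; linear_combination h
      have hE : (2*((m:ℚ)+1) * E (m+1) (j'+3)) * (2*((m:ℚ)+1) * E (m+1) (j'+1))
          < (2*((m:ℚ)+1) * E (m+1) (j'+2))^2 := by
        rw [r1, r2, r0]; exact hq
      have h6 : (2*((m:ℚ)+1))^2 * (E (m+1) (j'+3) * E (m+1) (j'+1))
          < (2*((m:ℚ)+1))^2 * (E (m+1) (j'+2))^2 := by linarith [hE]
      exact lt_of_mul_lt_mul_left h6 (le_of_lt ha2)

theorem stmt7 (m i : ℕ) (hm : 2 ≤ m) (hi1 : 1 ≤ i) (hi2 : i ≤ m - 1) :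
    (i:ℚ) * (d m i)^2 > ((i:ℚ)+1) * d m (i+1) * d m (i-1) := by
  obtain ⟨j, rfl⟩ : ∃ j, i = j+1 := ⟨i-1, by omega⟩
  have hj : j + 1 ≤ m := by omega
  have h := main m j hj
  unfold E at h
  rw [Nat.factorial_succ, Nat.factorial_succ] at h
  have hf : (0:ℚ) < (Nat.factorial j : ℚ) := by positivity
  have hj1 : (0:ℚ) < (j:ℚ)+1 := by positivity
  have hred : j + 1 - 1 = j := by omega
  rw [hred]
  push_cast at h ⊢
  nlinarith [h, mul_pos (mul_pos hj1 hf) hf]
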